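/- Let L be a filtered cochain complex over 𝕂 whose filtration is descending, bounded above and complete, let r ≥ 1 be a fixed integer, and assume H⁰((F_{2^q}L)/(F_{min(r,2^{q+1})}L)) = 0 for every integer q ≥ 0 with 2^q < r. If x ∈ L⁰ (= F₁L⁰) and d_L(x) ∈ F_rL¹, then there exists y ∈ L^{-1} (= F₁L^{-1}) such that x − d_L(y) ∈ F_rL⁰. -/

import Mathlib

/-- Lemma 3.4 of the paper, second part.
Same setting as Statement 0: if `x` has degree `0` and `d x ∈ F r`, then there
is `y` of degree `-1` with `x - d y ∈ F r`. -/
theorem goldman_millson_stmt1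
    (𝕂 : Type*) [Field 𝕂]
    (M : Type*) [AddCommGroup M] [Module 𝕂 M]
    (G : ℤ → Submodule 𝕂 M)
    (hG : DirectSum.IsInternal G)
    (d : M →ₗ[𝕂] M)
    (hd_deg : ∀ n : ℤ, ∀ x ∈ G n, d x ∈ G (n + 1))
    (hdd : ∀ x : M, d (d x) = 0)
    (F : ℤ → Submodule 𝕂 M)
    (hF_anti : Antitone F)
    (hF_top : ∀ p : ℤ, p ≤ 1 → F p = ⊤)
    (hF_graded : ∀ p : ℤ, F p = ⨆ n : ℤ, F p ⊓ G n)
    (hdF : ∀ p : ℤ, ∀ x ∈ F p, d x ∈ F p)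
    (hsep : ∀ x : M, (∀ p : ℤ, x ∈ F p) → x = 0)
    (hconv : ∀ x : ℕ → M, (∀ p : ℕ, 1 ≤ p → x (p + 1) - x p ∈ F (p : ℤ)) →
      ∃ y : M, ∀ p : ℕ, 1 ≤ p → y - x p ∈ F (p : ℤ))
    (r : ℤ) (hr : 1 ≤ r)
    (hH0 : ∀ q : ℕ, (2 : ℤ) ^ q < r →
      ∀ x ∈ F ((2 : ℤ) ^ q) ⊓ G 0, d x ∈ F (min r ((2 : ℤ) ^ (q + 1))) →
        ∃ y ∈ F ((2 : ℤ) ^ q) ⊓ G (-1), x - d y ∈ F (min r ((2 : ℤ) ^ (q + 1))))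
    (x : M) (hx : x ∈ G 0) (hdx : d x ∈ F r) :
    ∃ y ∈ G (-1), x - d y ∈ F r := by
  -- main induction: at each stage q we have y with x - d y ∈ F (min r 2^q)
  have key : ∀ q : ℕ, ∃ y ∈ G (-1), x - d y ∈ F (min r ((2 : ℤ) ^ q)) := by
    intro q
    induction q with
    | zero =>
      refine ⟨0, (G (-1)).zero_mem, ?_⟩
      have h1 : min r ((2 : ℤ) ^ (0 : ℕ)) ≤ 1 := by
        simpa using min_le_right r ((2 : ℤ) ^ (0 : ℕ))
      rw [hF_top _ h1]; trivial
    | succ q ih =>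
      obtain ⟨y, hyG, hxy⟩ := ih
      by_cases hlt : (2 : ℤ) ^ q < r
      · -- apply hH0 to x - d y
        have hmin : min r ((2 : ℤ) ^ q) = (2 : ℤ) ^ q := min_eq_right hlt.le
        have hdyG : d y ∈ G 0 := by simpa using hd_deg (-1) y hyG
        have hx' : x - d y ∈ F ((2 : ℤ) ^ q) ⊓ G 0 :=
          ⟨by rwa [hmin] at hxy, sub_mem hx hdyG⟩
        have hdx' : d (x - d y) ∈ F (min r ((2 : ℤ) ^ (q + 1))) := by
          have : d (x - d y) = d x := by
            simp [map_sub, hdd y]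
          rw [this]
          exact hF_anti (min_le_left _ _) hdx
        obtain ⟨y', ⟨_, hy'G⟩, hxy'⟩ := hH0 q hlt (x - d y) hx' hdx'
        refine ⟨y + y', add_mem hyG hy'G, ?_⟩
        have : x - d (y + y') = (x - d y) - d y' := by
          simp [map_add]; abel
        rwa [this]
      · -- r ≤ 2^q ≤ 2^(q+1), so min stays r
        push_neg at hlt
        have h1 : min r ((2 : ℤ) ^ q) = r := min_eq_left hlt
        have h2 : min r ((2 : ℤ) ^ (q + 1)) = r := by
          refine min_eq_left (hlt.trans ?_)
          exact pow_le_pow_right₀ one_le_two (Nat.le_succ q)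
        exact ⟨y, hyG, by rwa [h1, ← h2] at hxy⟩
  -- pick q large enough that r ≤ 2^q
  obtain ⟨y, hyG, hxy⟩ := key r.toNat
  have hle : r ≤ (2 : ℤ) ^ r.toNat := by
    calc r = (r.toNat : ℤ) := by omega
    _ ≤ ((2 ^ r.toNat : ℕ) : ℤ) := by exact_mod_cast (Nat.lt_two_pow_self (n := r.toNat)).le
    _ = (2 : ℤ) ^ r.toNat := by push_cast; ring
  rw [min_eq_left hle] at hxy
  exact ⟨y, hyG, hxy⟩
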